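/- Fix δ ∈ (0, 1/2) and assume c_2 := E(m^{(1−δ)X_0^*}) < ∞. Then for every p ∈ (0,1), every integer k ≥ 1 and every integer n ≥ 1, |d^k/dp^k P(X_n = 0)| ≤ 2^k · k! · m^{kn} · P( Σ_{i=1}^{m^n − k} X_{0,i} ≤ m^n ), where X_{0,i}, i ≥ 1, are independent copies of X_0. -/

import Mathlib

noncomputable section

/-- One step of the Derrida–Retaux recursion on probability mass functions on ℕ. -/
def drStep (m : ℕ) (μ : ℕ → ℝ) : ℕ → ℝ :=
  fun j => ∑' x : Fin m → ℕ, if (∑ i, x i) - 1 = j then ∏ i, μ (x i) else 0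

/-- The mass function of `X_0`, namely `(1 - p)·δ_0 + p·ν`. -/
def mix (ν : ℕ → ℝ) (p : ℝ) : ℕ → ℝ :=
  fun k => (1 - p) * (if k = 0 then 1 else 0) + p * ν k

/-- The mass function of `X_n`. -/
def drLaw (m : ℕ) (ν : ℕ → ℝ) (p : ℝ) (n : ℕ) : ℕ → ℝ :=
  (drStep m)^[n] (mix ν p)

/-- `sumLaw μ N` is the mass function of the sum of `N` independent copies of a
random variable with mass function `μ` (the `N`-fold convolution of `μ`). -/
def sumLaw (μ : ℕ → ℝ) : ℕ → ℕ → ℝ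
  | 0, j => if j = 0 then 1 else 0
  | N + 1, j => ∑ a ∈ Finset.range (j + 1), μ a * sumLaw μ N (j - a)

open Finset ENNReal

namespace DRX

/-! ### The tree recursion on leaf values -/

def blk (m n : ℕ) : Fin m × Fin (m ^ n) ≃ Fin (m ^ (n + 1)) :=
  finProdFinEquiv.trans (finCongr (pow_succ' m n).symm)

def tf (m : ℕ) : (n : ℕ) → (Fin (m ^ n) → ℕ) → ℕ
  | 0, x => x ⟨0, by simp⟩
  | n + 1, x => (∑ i : Fin m, tf m n (fun t => x (blk m n (i, t)))) - 1

instance uniqueFinPow (m : ℕ) : Unique (Fin (m ^ 0)) :=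
  (finCongr (pow_zero m)).unique

lemma geom_le {m : ℕ} (hm : 2 ≤ m) (n : ℕ) : ∑ i ∈ range n, m ^ i ≤ m ^ n := by
  induction n with
  | zero => simp
  | succ n ih =>
    rw [Finset.sum_range_succ]
    have h1 : m ^ n + m ^ n ≤ m * m ^ n := by
      have : 2 * m ^ n ≤ m * m ^ n := Nat.mul_le_mul_right _ hm
      omega
    calc (∑ i ∈ range n, m ^ i) + m ^ n ≤ m ^ n + m ^ n := by omega
      _ ≤ m * m ^ n := h1
      _ = m ^ (n + 1) := (pow_succ' m n).symm

lemma sum_le_tf (m : ℕ) : ∀ (n : ℕ) (x : Fin (m ^ n) → ℕ),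
    ∑ t, x t ≤ tf m n x + ∑ i ∈ range n, m ^ i := by
  intro n
  induction n with
  | zero =>
    intro x
    rw [Fintype.sum_unique]
    simp [tf]
    exact le_of_eq (congrArg x (Subsingleton.elim _ _))
  | succ n ih =>
    intro x
    have h1 : ∑ t, x t = ∑ q : Fin m × Fin (m ^ n), x (blk m n q) :=
      (Equiv.sum_comp (blk m n) x).symm
    rw [h1, Fintype.sum_prod_type]
    have h2 : ∀ i : Fin m, ∑ t : Fin (m ^ n), x (blk m n (i, t))
        ≤ tf m n (fun t => x (blk m n (i, t))) + ∑ i ∈ range n, m ^ i :=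
      fun i => ih _
    have h3 : ∑ i : Fin m, ∑ t : Fin (m ^ n), x (blk m n (i, t))
        ≤ ∑ i : Fin m, (tf m n (fun t => x (blk m n (i, t))) + ∑ i ∈ range n, m ^ i) :=
      Finset.sum_le_sum (fun i _ => h2 i)
    rw [Finset.sum_add_distrib, Finset.sum_const, Finset.card_univ, Fintype.card_fin,
      smul_eq_mul] at h3
    have h4 : tf m (n + 1) x = (∑ i : Fin m, tf m n (fun t => x (blk m n (i, t)))) - 1 := rfl
    have h5 : ∑ i ∈ range (n + 1), m ^ i = m * (∑ i ∈ range n, m ^ i) + 1 := by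
      rw [geom_sum_succ]
    omega

lemma coord_le {m : ℕ} (hm : 2 ≤ m) {n : ℕ} {x : Fin (m ^ n) → ℕ}
    (h : tf m n x = 0) (i : Fin (m ^ n)) : x i ≤ m ^ n := by
  have h1 : x i ≤ ∑ t, x t :=
    Finset.single_le_sum (fun t _ => Nat.zero_le _) (Finset.mem_univ i)
  have h2 := sum_le_tf m n x
  rw [h] at h2
  have h3 := geom_le hm n
  omega

end DRX

namespace DRX

/-! ### ENNReal-valued version of the recursion -/

def stepE (m : ℕ) (μ : ℕ → ℝ≥0∞) : ℕ → ℝ≥0∞ :=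
  fun j => ∑' x : Fin m → ℕ, if (∑ i, x i) - 1 = j then ∏ i, μ (x i) else 0

lemma prod_tsum {β : Type} : ∀ (M : ℕ) (f : Fin M → β → ℝ≥0∞),
    ∏ i, ∑' b, f i b = ∑' g : Fin M → β, ∏ i, f i (g i) := by
  intro M
  induction M with
  | zero =>
    intro f
    haveI : Unique (Fin 0 → β) := ⟨⟨fun i => i.elim0⟩, fun a => funext fun i => i.elim0⟩
    rw [tsum_eq_single (default : Fin 0 → β) (fun b hb => absurd (Subsingleton.elim b default) hb)]
    simp
  | succ M ih =>
    intro f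
    rw [← Equiv.tsum_eq (Fin.consEquiv (fun _ => β)) (fun g => ∏ i, f i (g i))]
    have h1 : ∀ p : β × (Fin M → β),
        (∏ i, f i ((Fin.consEquiv (fun _ => β)) p i))
          = f 0 p.1 * ∏ i : Fin M, f i.succ (p.2 i) := by
      intro p
      rw [Fin.prod_univ_succ]
      have hz : (Fin.consEquiv (fun _ => β)) p 0 = p.1 := by simp [Fin.consEquiv]
      have hs : ∀ i : Fin M, (Fin.consEquiv (fun _ => β)) p i.succ = p.2 i := by
        intro i; simp [Fin.consEquiv]
      rw [hz]
      exact congrArg _ (Finset.prod_congr rfl fun i _ => by rw [hs])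
    rw [tsum_congr h1]
    symm
    calc ∑' p : β × (Fin M → β), f 0 p.1 * ∏ i : Fin M, f i.succ (p.2 i)
        = ∑' b, ∑' g : Fin M → β, f 0 b * ∏ i : Fin M, f i.succ (g i) :=
          ENNReal.tsum_prod (f := fun (b : β) (g : Fin M → β) =>
            f 0 b * ∏ i : Fin M, f i.succ (g i))
      _ = ∑' b, f 0 b * ∑' g : Fin M → β, ∏ i : Fin M, f i.succ (g i) :=
          tsum_congr fun b => ENNReal.tsum_mul_left
      _ = (∑' b, f 0 b) * ∑' g : Fin M → β, ∏ i : Fin M, f i.succ (g i) :=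
          ENNReal.tsum_mul_right
      _ = (∑' b, f 0 b) * ∏ i : Fin M, ∑' b, f i.succ b := by
          rw [ih (fun i b => f i.succ b)]
      _ = ∏ i : Fin (M + 1), ∑' b, f i b :=
          (Fin.prod_univ_succ (fun i => ∑' b, f i b)).symm

lemma stepE_iterate (m : ℕ) (μ : ℕ → ℝ≥0∞) : ∀ (n : ℕ) (j : ℕ),
    (stepE m)^[n] μ j = ∑' x : Fin (m ^ n) → ℕ, if tf m n x = j then ∏ i, μ (x i) else 0 := by
  intro n
  induction n with
  | zero =>
    intro j
    let e0 : ℕ ≃ (Fin (m ^ 0) → ℕ) := (Equiv.funUnique (Fin (m ^ 0)) ℕ).symm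
    rw [← Equiv.tsum_eq e0 (fun x => if tf m 0 x = j then ∏ i, μ (x i) else 0)]
    have h1 : ∀ a : ℕ, (if tf m 0 (e0 a) = j then ∏ i : Fin (m ^ 0), μ (e0 a i) else 0)
        = if a = j then μ a else 0 := by
      intro a
      have h2 : tf m 0 (e0 a) = a := rfl
      have h3 : ∏ i : Fin (m ^ 0), μ (e0 a i) = μ a := by
        show ∏ _i : Fin (m ^ 0), μ a = μ a
        rw [Finset.prod_const, Finset.card_univ, Fintype.card_fin, pow_zero, pow_one]
      rw [h2, h3]
    rw [tsum_congr h1, tsum_eq_single j (fun b hb => if_neg hb), if_pos rfl]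
    simp
  | succ n ih =>
    intro j
    rw [Function.iterate_succ_apply']
    show ∑' z : Fin m → ℕ, (if (∑ i, z i) - 1 = j
        then ∏ i, ((stepE m)^[n] μ) (z i) else 0) = _
    have h1 : ∀ z : Fin m → ℕ, ∏ i, ((stepE m)^[n] μ) (z i)
        = ∑' y : Fin m → (Fin (m ^ n) → ℕ),
            ∏ i, (if tf m n (y i) = z i then ∏ t, μ (y i t) else 0) := by
      intro z
      rw [← prod_tsum m (fun i b => if tf m n b = z i then ∏ t, μ (b t) else 0)]
      exact Finset.prod_congr rfl fun i _ => ih (z i)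
    calc ∑' z : Fin m → ℕ, (if (∑ i, z i) - 1 = j then ∏ i, ((stepE m)^[n] μ) (z i) else 0)
        = ∑' z : Fin m → ℕ, ∑' y : Fin m → (Fin (m ^ n) → ℕ),
            (if (∑ i, z i) - 1 = j
              then ∏ i, (if tf m n (y i) = z i then ∏ t, μ (y i t) else 0) else 0) := by
          refine tsum_congr fun z => ?_
          rw [h1 z]
          split_ifs
          · rfl
          · simp
      _ = ∑' y : Fin m → (Fin (m ^ n) → ℕ), ∑' z : Fin m → ℕ,
            (if (∑ i, z i) - 1 = j
              then ∏ i, (if tf m n (y i) = z i then ∏ t, μ (y i t) else 0) else 0) :=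
          ENNReal.tsum_comm
      _ = ∑' y : Fin m → (Fin (m ^ n) → ℕ),
            (if (∑ i, tf m n (y i)) - 1 = j then ∏ i, ∏ t, μ (y i t) else 0) := by
          refine tsum_congr fun y => ?_
          rw [tsum_eq_single (fun i => tf m n (y i)) ?_]
          · split_ifs with h
            · exact Finset.prod_congr rfl fun i _ => if_pos rfl
            · rfl
          · intro z hz
            obtain ⟨i, hi⟩ := Function.ne_iff.mp hz
            have hzero : ∏ i, (if tf m n (y i) = z i then ∏ t, μ (y i t) else 0) = 0 :=
              Finset.prod_eq_zero (Finset.mem_univ i) (if_neg (fun h => hi h.symm))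
            rw [hzero]
            split_ifs <;> rfl
      _ = ∑' x : Fin (m ^ (n + 1)) → ℕ, if tf m (n + 1) x = j then ∏ i, μ (x i) else 0 := by
          let E : (Fin (m ^ (n + 1)) → ℕ) ≃ (Fin m → Fin (m ^ n) → ℕ) :=
            (Equiv.arrowCongr (blk m n) (Equiv.refl ℕ)).symm.trans
              (Equiv.curry (Fin m) (Fin (m ^ n)) ℕ)
          rw [← Equiv.tsum_eq E (fun y =>
            if (∑ i, tf m n (y i)) - 1 = j then ∏ i, ∏ t, μ (y i t) else 0)]
          refine tsum_congr fun x => ?_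
          have hEx : ∀ i t, E x i t = x (blk m n (i, t)) := fun i t => rfl
          have hcond : (∑ i, tf m n (E x i)) - 1 = tf m (n + 1) x := by
            show _ = (∑ i : Fin m, tf m n (fun t => x (blk m n (i, t)))) - 1
            rfl
          have hval : ∏ i, ∏ t, μ (E x i t) = ∏ s, μ (x s) := by
            calc ∏ i, ∏ t, μ (E x i t) = ∏ q : Fin m × Fin (m ^ n), μ (x (blk m n q)) := by
                  rw [Fintype.prod_prod_type]; rfl
              _ = ∏ s, μ (x s) := Equiv.prod_comp (blk m n) (fun s => μ (x s))
          rw [hcond, hval]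

lemma tsum_stepE (m : ℕ) (μ : ℕ → ℝ≥0∞) : ∑' j, stepE m μ j = (∑' a, μ a) ^ m := by
  unfold stepE
  rw [ENNReal.tsum_comm]
  calc ∑' x : Fin m → ℕ, ∑' j, (if (∑ i, x i) - 1 = j then ∏ i, μ (x i) else 0)
      = ∑' x : Fin m → ℕ, ∏ i, μ (x i) := by
        refine tsum_congr fun x => ?_
        rw [tsum_eq_single ((∑ i, x i) - 1) (fun b hb => if_neg (fun h => hb h.symm)), if_pos rfl]
    _ = ∏ _i : Fin m, ∑' a, μ a := (prod_tsum m (fun _ a => μ a)).symm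
    _ = (∑' a, μ a) ^ m := by rw [Finset.prod_const, Finset.card_univ, Fintype.card_fin]

lemma iterate_mass (m : ℕ) (μ : ℕ → ℝ≥0∞) (hμ : ∑' a, μ a = 1) :
    ∀ n, ∑' j, (stepE m)^[n] μ j = 1 := by
  intro n
  induction n with
  | zero => exact hμ
  | succ n ih => rw [Function.iterate_succ_apply', tsum_stepE, ih, one_pow]

lemma iterate_ne_top (m : ℕ) (μ : ℕ → ℝ≥0∞) (hμ : ∑' a, μ a = 1) (n j : ℕ) :
    (stepE m)^[n] μ j ≠ ⊤ := by
  have h := (ENNReal.le_tsum j).trans (iterate_mass m μ hμ n).le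
  exact (h.trans_lt ENNReal.one_lt_top).ne

lemma drStep_toReal (m : ℕ) (μ : ℕ → ℝ≥0∞) (hfin : ∀ a, μ a ≠ ⊤) (j : ℕ) :
    drStep m (fun a => (μ a).toReal) j = (stepE m μ j).toReal := by
  unfold drStep stepE
  have hterm : ∀ x : Fin m → ℕ,
      (if (∑ i, x i) - 1 = j then ∏ i, μ (x i) else 0) ≠ ⊤ := by
    intro x
    split_ifs
    · exact ENNReal.prod_ne_top (fun i _ => hfin _)
    · simp
  rw [ENNReal.tsum_toReal_eq hterm]
  refine tsum_congr fun x => ?_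
  split_ifs <;> simp [ENNReal.toReal_prod]

end DRX

namespace DRX

section Transfer

variable {ν : ℕ → ℝ} (hν0 : ν 0 = 0) (hνnn : ∀ k, 0 ≤ ν k) (hνsum : ∑' k, ν k = 1)

lemma nu_summable (hνsum : ∑' k, ν k = 1) : Summable ν := by
  by_contra h
  rw [tsum_eq_zero_of_not_summable h] at hνsum
  norm_num at hνsum

lemma mix_nonneg (hνnn : ∀ k, 0 ≤ ν k) {p : ℝ} (hp0 : 0 ≤ p) (hp1 : p ≤ 1) (c : ℕ) :
    0 ≤ mix ν p c := by
  unfold mix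
  have h1 : (0:ℝ) ≤ (if c = 0 then (1:ℝ) else 0) := by split_ifs <;> norm_num
  have h2 : (0:ℝ) ≤ 1 - p := by linarith
  exact add_nonneg (mul_nonneg h2 h1) (mul_nonneg hp0 (hνnn c))

def μE (ν : ℕ → ℝ) (p : ℝ) : ℕ → ℝ≥0∞ := fun a => ENNReal.ofReal (mix ν p a)

lemma tsum_μE (hνnn : ∀ k, 0 ≤ ν k) (hνsum : ∑' k, ν k = 1)
    {p : ℝ} (hp0 : 0 ≤ p) (hp1 : p ≤ 1) : ∑' a, μE ν p a = 1 := by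
  have hsummable := nu_summable hνsum
  have h2 : (0:ℝ) ≤ 1 - p := by linarith
  unfold μE mix
  have hsplit : ∀ a : ℕ, ENNReal.ofReal ((1 - p) * (if a = 0 then (1:ℝ) else 0) + p * ν a)
      = ENNReal.ofReal ((1 - p) * (if a = 0 then (1:ℝ) else 0)) + ENNReal.ofReal (p * ν a) := by
    intro a
    refine ENNReal.ofReal_add ?_ (mul_nonneg hp0 (hνnn a))
    exact mul_nonneg h2 (by split_ifs <;> norm_num)
  rw [tsum_congr hsplit, ENNReal.tsum_add]
  have hfirst : ∑' a : ℕ, ENNReal.ofReal ((1 - p) * (if a = 0 then (1:ℝ) else 0))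
      = ENNReal.ofReal (1 - p) := by
    rw [tsum_eq_single 0 (fun b hb => by rw [if_neg hb, mul_zero, ENNReal.ofReal_zero])]
    rw [if_pos rfl, mul_one]
  have hsecond : ∑' a : ℕ, ENNReal.ofReal (p * ν a) = ENNReal.ofReal p := by
    calc ∑' a : ℕ, ENNReal.ofReal (p * ν a)
        = ∑' a : ℕ, ENNReal.ofReal p * ENNReal.ofReal (ν a) :=
          tsum_congr fun a => ENNReal.ofReal_mul hp0
      _ = ENNReal.ofReal p * ∑' a : ℕ, ENNReal.ofReal (ν a) := ENNReal.tsum_mul_left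
      _ = ENNReal.ofReal p * ENNReal.ofReal (∑' a, ν a) := by
          rw [← ENNReal.ofReal_tsum_of_nonneg hνnn hsummable]
      _ = ENNReal.ofReal p := by rw [hνsum, ENNReal.ofReal_one, mul_one]
  rw [hfirst, hsecond, ← ENNReal.ofReal_add h2 hp0]
  norm_num

lemma drLaw_repr (m : ℕ) (hνnn : ∀ k, 0 ≤ ν k) (hνsum : ∑' k, ν k = 1)
    {p : ℝ} (hp0 : 0 ≤ p) (hp1 : p ≤ 1) (n : ℕ) :
    ∀ j, drLaw m ν p n j = ((stepE m)^[n] (μE ν p) j).toReal := by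
  unfold drLaw
  induction n with
  | zero =>
    intro j
    simp only [Function.iterate_zero, id_eq]
    exact (ENNReal.toReal_ofReal (mix_nonneg hνnn hp0 hp1 j)).symm
  | succ n ih =>
    intro j
    rw [Function.iterate_succ_apply', Function.iterate_succ_apply']
    have hfin : ∀ a, (stepE m)^[n] (μE ν p) a ≠ ⊤ :=
      fun a => iterate_ne_top m _ (tsum_μE hνnn hνsum hp0 hp1) n a
    rw [← drStep_toReal m _ hfin j]
    have hfun : (drStep m)^[n] (mix ν p) = fun a => ((stepE m)^[n] (μE ν p) a).toReal :=
      funext ih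
    rw [hfun]

lemma repr_finite {m : ℕ} (hm : 2 ≤ m) (hνnn : ∀ k, 0 ≤ ν k) (hνsum : ∑' k, ν k = 1)
    {p : ℝ} (hp0 : 0 ≤ p) (hp1 : p ≤ 1) (n : ℕ) :
    drLaw m ν p n 0 = ∑ x : Fin (m ^ n) → Fin (m ^ n + 1),
      if tf m n (fun i => (x i : ℕ)) = 0 then ∏ i, mix ν p ((x i : ℕ)) else 0 := by
  rw [drLaw_repr m hνnn hνsum hp0 hp1 n 0, stepE_iterate]
  have hout : ∀ y : Fin (m ^ n) → ℕ,
      y ∉ Finset.image (fun (x : Fin (m ^ n) → Fin (m ^ n + 1)) (i : Fin (m ^ n)) => (x i : ℕ))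
        Finset.univ →
      (if tf m n y = 0 then ∏ i, μE ν p (y i) else 0) = 0 := by
    intro y hy
    rw [if_neg]
    intro h0
    apply hy
    refine Finset.mem_image.mpr ⟨fun i => ⟨y i, Nat.lt_succ_of_le (coord_le hm h0 i)⟩,
      Finset.mem_univ _, rfl⟩
  rw [tsum_eq_sum hout]
  have hinj : ∀ x ∈ (Finset.univ : Finset (Fin (m ^ n) → Fin (m ^ n + 1))),
      ∀ y ∈ (Finset.univ : Finset (Fin (m ^ n) → Fin (m ^ n + 1))),
      (fun i => ((x i : ℕ))) = (fun i => ((y i : ℕ))) → x = y := by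
    intro x _ y _ h
    funext i
    exact Fin.ext (congrFun h i)
  rw [Finset.sum_image hinj]
  rw [ENNReal.toReal_sum (fun x _ => by
    split_ifs
    · exact ENNReal.prod_ne_top (fun i _ => ENNReal.ofReal_ne_top)
    · simp)]
  refine Finset.sum_congr rfl fun x _ => ?_
  split_ifs
  · rw [ENNReal.toReal_prod]
    exact Finset.prod_congr rfl fun i _ =>
      ENNReal.toReal_ofReal (mix_nonneg hνnn hp0 hp1 _)
  · simp

end Transfer

end DRX

namespace DRX

/-! ### Derivative machinery -/

lemma iteratedDeriv_zero_fun (k : ℕ) : iteratedDeriv k (fun _ : ℝ => (0:ℝ)) = fun _ => 0 := by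
  induction k with
  | zero => rw [iteratedDeriv_zero]
  | succ k ih => rw [iteratedDeriv_succ, ih]; exact deriv_const' 0

lemma iteratedDeriv_const_fun (k : ℕ) (hk : k ≠ 0) (c : ℝ) :
    iteratedDeriv k (fun _ : ℝ => c) = fun _ => 0 := by
  obtain ⟨k, rfl⟩ := Nat.exists_eq_succ_of_ne_zero hk
  rw [iteratedDeriv_succ', deriv_const']
  exact iteratedDeriv_zero_fun k

lemma affine_contDiff (a b : ℝ) : ContDiff ℝ (⊤:ℕ∞) (fun q : ℝ => a + b * q) :=
  contDiff_const.add (contDiff_const.mul contDiff_id)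

lemma contDiff_affprod {ι : Type*} (s : Finset ι) (a b : ι → ℝ) :
    ContDiff ℝ (⊤:ℕ∞) (fun q : ℝ => ∏ i ∈ s, (a i + b i * q)) := by
  induction s using Finset.cons_induction with
  | empty => simpa using (contDiff_const : ContDiff ℝ (⊤:ℕ∞) (fun _ : ℝ => (1:ℝ)))
  | cons j s hj ih =>
    have : (fun q : ℝ => ∏ i ∈ Finset.cons j s hj, (a i + b i * q))
        = fun q => (a j + b j * q) * ∏ i ∈ s, (a i + b i * q) :=
      funext fun q => Finset.prod_cons hj
    rw [this]
    exact (affine_contDiff (a j) (b j)).mul ih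

lemma diff_iter {g : ℝ → ℝ} (hg : ContDiff ℝ (⊤:ℕ∞) g) (j : ℕ) :
    Differentiable ℝ (iteratedDeriv j g) :=
  hg.differentiable_iteratedDeriv j (by exact_mod_cast lt_top_iff_ne_top.2 (by simp))

lemma iteratedDeriv_affine_mul (a b : ℝ) (g : ℝ → ℝ) (hg : ContDiff ℝ (⊤:ℕ∞) g) (k : ℕ) :
    iteratedDeriv k (fun q => (a + b * q) * g q)
      = fun q => (a + b * q) * iteratedDeriv k g q
          + (k : ℝ) * b * iteratedDeriv (k - 1) g q := by
  induction k with
  | zero =>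
    funext q
    simp [iteratedDeriv_zero]
  | succ k ih =>
    have haff : Differentiable ℝ (fun q : ℝ => a + b * q) :=
      (differentiable_id.const_mul b).const_add a
    funext q
    rw [iteratedDeriv_succ, ih]
    have h1 : DifferentiableAt ℝ (fun q => (a + b * q) * iteratedDeriv k g q) q :=
      ((haff q).mul ((diff_iter hg k) q))
    have h2 : DifferentiableAt ℝ (fun q => (k : ℝ) * b * iteratedDeriv (k - 1) g q) q :=
      ((diff_iter hg (k - 1)) q).const_mul _
    rw [deriv_fun_add h1 h2, deriv_fun_mul (haff q) ((diff_iter hg k) q),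
      deriv_const_mul _ ((diff_iter hg (k - 1)) q)]
    have hda : deriv (fun q : ℝ => a + b * q) q = b := by
      simpa using (((hasDerivAt_id q).const_mul b).const_add a).deriv
    have h3 : (k : ℝ) * b * deriv (iteratedDeriv (k - 1) g) q
        = (k : ℝ) * b * iteratedDeriv k g q := by
      cases k with
      | zero => simp
      | succ k =>
        rw [Nat.succ_sub_one, ← iteratedDeriv_succ]
    rw [hda, h3, ← iteratedDeriv_succ]
    have h4 : (k + 1 : ℕ) - 1 = k := Nat.succ_sub_one k
    rw [h4]
    push_cast
    ring

lemma iteratedDeriv_add_fun {f g : ℝ → ℝ} (hf : ContDiff ℝ (⊤:ℕ∞) f)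
    (hg : ContDiff ℝ (⊤:ℕ∞) g) (k : ℕ) (x : ℝ) :
    iteratedDeriv k (fun q => f q + g q) x = iteratedDeriv k f x + iteratedDeriv k g x := by
  have h := iteratedDerivWithin_add (s := Set.univ) (x := x) (n := k) (f := f) (g := g)
    (Set.mem_univ x) uniqueDiffOn_univ
    (hf.of_le (by exact_mod_cast le_top) : ContDiff ℝ k f).contDiffWithinAt
    (hg.of_le (by exact_mod_cast le_top) : ContDiff ℝ k g).contDiffWithinAt
  simp only [iteratedDerivWithin_univ] at h
  exact h

lemma contDiff_finset_sum {ι : Type*} (s : Finset ι) (f : ι → ℝ → ℝ)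
    (hf : ∀ i ∈ s, ContDiff ℝ (⊤:ℕ∞) (f i)) :
    ContDiff ℝ (⊤:ℕ∞) (fun q => ∑ i ∈ s, f i q) := by
  induction s using Finset.cons_induction with
  | empty => simpa using (contDiff_const : ContDiff ℝ (⊤:ℕ∞) (fun _ : ℝ => (0:ℝ)))
  | cons j s hj ih =>
    simp only [Finset.sum_cons]
    exact (hf j (Finset.mem_cons_self j s)).add
      (ih (fun i hi => hf i (Finset.mem_cons_of_mem hi)))

lemma iteratedDeriv_finset_sum {ι : Type*} (s : Finset ι) (f : ι → ℝ → ℝ)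
    (hf : ∀ i ∈ s, ContDiff ℝ (⊤:ℕ∞) (f i)) (k : ℕ) (x : ℝ) :
    iteratedDeriv k (fun q => ∑ i ∈ s, f i q) x = ∑ i ∈ s, iteratedDeriv k (f i) x := by
  induction s using Finset.cons_induction with
  | empty =>
    simp only [Finset.sum_empty]
    rw [iteratedDeriv_zero_fun]
  | cons j s hj ih =>
    simp only [Finset.sum_cons]
    rw [iteratedDeriv_add_fun (hf j (Finset.mem_cons_self j s))
        (contDiff_finset_sum s f (fun i hi => hf i (Finset.mem_cons_of_mem hi))) k x,
      ih (fun i hi => hf i (Finset.mem_cons_of_mem hi))]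

end DRX

namespace DRX

lemma key_bound {ι : Type*} [DecidableEq ι] (a b : ι → ℝ) (p : ℝ) (s : Finset ι) :
    ∀ k : ℕ, |iteratedDeriv k (fun q => ∏ i ∈ s, (a i + b i * q)) p|
      ≤ (k.factorial : ℝ) * ∑ U ∈ s.powersetCard k,
          (∏ i ∈ U, |b i|) * ∏ i ∈ s \ U, |a i + b i * p| := by
  induction s using Finset.induction with
  | empty =>
    intro k
    cases k with
    | zero =>
      simp [iteratedDeriv_zero]
    | succ k =>
      have h1 : (fun q : ℝ => ∏ i ∈ (∅ : Finset ι), (a i + b i * q)) = fun _ => 1 := by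
        funext q; simp
      rw [h1, iteratedDeriv_const_fun _ (Nat.succ_ne_zero k)]
      simp only [abs_zero]
      positivity
  | @insert j s hj ih =>
    intro k
    cases k with
    | zero =>
      simp only [iteratedDeriv_zero, Finset.powersetCard_zero, Finset.sum_singleton,
        Nat.factorial_zero, Nat.cast_one, one_mul, Finset.prod_empty, Finset.sdiff_empty]
      exact le_of_eq (Finset.abs_prod _ _)
    | succ k =>
      have hrw : (fun q : ℝ => ∏ i ∈ insert j s, (a i + b i * q))
          = fun q => (a j + b j * q) * ∏ i ∈ s, (a i + b i * q) :=
        funext fun q => Finset.prod_insert hj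
      rw [hrw, iteratedDeriv_affine_mul (a j) (b j) _ (contDiff_affprod s a b) (k + 1)]
      have hk1 : (k + 1 : ℕ) - 1 = k := Nat.succ_sub_one k
      rw [hk1]
      refine (abs_add_le _ _).trans ?_
      -- bound the two pieces
      have hA : |(a j + b j * p) * iteratedDeriv (k + 1)
            (fun q => ∏ i ∈ s, (a i + b i * q)) p|
          ≤ |a j + b j * p| * (((k + 1).factorial : ℝ) * ∑ U ∈ s.powersetCard (k + 1),
              (∏ i ∈ U, |b i|) * ∏ i ∈ s \ U, |a i + b i * p|) := by
        rw [abs_mul]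
        exact mul_le_mul_of_nonneg_left (ih (k + 1)) (abs_nonneg _)
      have hB : |((k + 1 : ℕ) : ℝ) * b j * iteratedDeriv k
            (fun q => ∏ i ∈ s, (a i + b i * q)) p|
          ≤ ((k + 1 : ℕ) : ℝ) * |b j| * ((k.factorial : ℝ) * ∑ U ∈ s.powersetCard k,
              (∏ i ∈ U, |b i|) * ∏ i ∈ s \ U, |a i + b i * p|) := by
        rw [abs_mul, abs_mul, abs_of_nonneg (by positivity : (0:ℝ) ≤ ((k + 1 : ℕ) : ℝ))]
        exact mul_le_mul_of_nonneg_left (ih k) (by positivity)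
      refine (add_le_add hA hB).trans (le_of_eq ?_)
      -- now rewrite the RHS sum over powersetCard of insert
      rw [Finset.powersetCard_succ_insert hj]
      have hdisj : Disjoint (s.powersetCard (k + 1))
          ((s.powersetCard k).image (insert j)) := by
        rw [Finset.disjoint_left]
        intro U hU hU2
        obtain ⟨hUs, _⟩ := Finset.mem_powersetCard.mp hU
        obtain ⟨V, hV, rfl⟩ := Finset.mem_image.mp hU2
        exact hj (hUs (Finset.mem_insert_self j V))
      rw [Finset.sum_union hdisj]
      have himg : ∑ U ∈ (s.powersetCard k).image (insert j),
            (∏ i ∈ U, |b i|) * ∏ i ∈ insert j s \ U, |a i + b i * p|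
          = ∑ V ∈ s.powersetCard k,
            (∏ i ∈ insert j V, |b i|) * ∏ i ∈ insert j s \ insert j V, |a i + b i * p| := by
        refine Finset.sum_image ?_
        intro V1 h1 V2 h2 hins
        have hj1 : j ∉ V1 := fun hc => hj ((Finset.mem_powersetCard.mp h1).1 hc)
        have hj2 : j ∉ V2 := fun hc => hj ((Finset.mem_powersetCard.mp h2).1 hc)
        rw [← Finset.erase_insert hj1, ← Finset.erase_insert hj2, hins]
      rw [himg]
      have hterm1 : ∀ U ∈ s.powersetCard (k + 1),
          (∏ i ∈ U, |b i|) * ∏ i ∈ insert j s \ U, |a i + b i * p|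
            = (∏ i ∈ U, |b i|) * (|a j + b j * p| * ∏ i ∈ s \ U, |a i + b i * p|) := by
        intro U hU
        obtain ⟨hUs, _⟩ := Finset.mem_powersetCard.mp hU
        have hjU : j ∉ U := fun hc => hj (hUs hc)
        rw [Finset.insert_sdiff_of_notMem _ hjU,
          Finset.prod_insert (fun hc => hj (Finset.mem_sdiff.mp hc).1)]
      have hterm2 : ∀ V ∈ s.powersetCard k,
          (∏ i ∈ insert j V, |b i|) * ∏ i ∈ insert j s \ insert j V, |a i + b i * p|
            = |b j| * ((∏ i ∈ V, |b i|) * ∏ i ∈ s \ V, |a i + b i * p|) := by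
        intro V hV
        have hjV : j ∉ V := fun hc => hj ((Finset.mem_powersetCard.mp hV).1 hc)
        have hsd : insert j s \ insert j V = s \ V := by
          ext i
          simp only [Finset.mem_sdiff, Finset.mem_insert]
          constructor
          · rintro ⟨h1 | h1, h2⟩
            · exact absurd (Or.inl h1) h2
            · exact ⟨h1, fun hc => h2 (Or.inr hc)⟩
          · rintro ⟨h1, h2⟩
            refine ⟨Or.inr h1, ?_⟩
            rintro (rfl | hc)
            · exact hj h1
            · exact h2 hc
        rw [hsd, Finset.prod_insert hjV]
        ring
      rw [Finset.sum_congr rfl hterm1, Finset.sum_congr rfl hterm2]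
      have e1 : ∑ U ∈ s.powersetCard (k + 1),
            (∏ i ∈ U, |b i|) * (|a j + b j * p| * ∏ i ∈ s \ U, |a i + b i * p|)
          = |a j + b j * p| * ∑ U ∈ s.powersetCard (k + 1),
            (∏ i ∈ U, |b i|) * ∏ i ∈ s \ U, |a i + b i * p| := by
        rw [Finset.mul_sum]
        exact Finset.sum_congr rfl fun U _ => by ring
      have e2 : ∑ V ∈ s.powersetCard k,
            |b j| * ((∏ i ∈ V, |b i|) * ∏ i ∈ s \ V, |a i + b i * p|)
          = |b j| * ∑ V ∈ s.powersetCard k,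
            (∏ i ∈ V, |b i|) * ∏ i ∈ s \ V, |a i + b i * p| := by
        rw [Finset.mul_sum]
      rw [e1, e2, Nat.factorial_succ]
      push_cast
      ring

end DRX

namespace DRX

lemma sumLaw_nonneg {μ : ℕ → ℝ} (hμ : ∀ a, 0 ≤ μ a) : ∀ t j, 0 ≤ sumLaw μ t j := by
  intro t
  induction t with
  | zero => intro j; simp only [sumLaw]; split_ifs <;> norm_num
  | succ t ih =>
    intro j
    simp only [sumLaw]
    exact Finset.sum_nonneg fun a _ => mul_nonneg (hμ a) (ih (j - a))

lemma SB_eq (μ : ℕ → ℝ) (B : ℕ) : ∀ (t M : ℕ), M ≤ B →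
    (∑ w : Fin t → Fin (B + 1), if (∑ i, ((w i : ℕ))) ≤ M then ∏ i, μ ((w i : ℕ)) else 0)
      = ∑ j ∈ Finset.range (M + 1), sumLaw μ t j := by
  intro t
  induction t with
  | zero =>
    intro M _
    haveI : Unique (Fin 0 → Fin (B + 1)) :=
      ⟨⟨fun i => i.elim0⟩, fun a => funext fun i => i.elim0⟩
    rw [Fintype.sum_unique]
    simp only [Finset.univ_eq_empty, Finset.sum_empty, Finset.prod_empty, Nat.zero_le, if_true]
    have h2 : ∀ j, sumLaw μ 0 j = if j = 0 then (1:ℝ) else 0 := fun j => rfl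
    rw [Finset.sum_congr rfl fun j _ => h2 j, Finset.sum_ite_eq' (Finset.range (M + 1)) 0 (fun _ => (1:ℝ))]
    simp
  | succ t ih =>
    intro M hM
    -- reindex along Fin.consEquiv
    rw [← Equiv.sum_comp (Fin.consEquiv (fun _ => Fin (B + 1)))
      (fun w => if (∑ i, ((w i : ℕ))) ≤ M then ∏ i, μ ((w i : ℕ)) else 0)]
    rw [Fintype.sum_prod_type]
    have hterm : ∀ (aa : Fin (B + 1)) (v : Fin t → Fin (B + 1)),
        (if (∑ i, (((Fin.consEquiv (fun _ => Fin (B + 1))) (aa, v) i : ℕ))) ≤ M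
          then ∏ i, μ (((Fin.consEquiv (fun _ => Fin (B + 1))) (aa, v) i : ℕ)) else 0)
        = (if (aa : ℕ) + ∑ i, ((v i : ℕ)) ≤ M
            then μ (aa : ℕ) * ∏ i, μ ((v i : ℕ)) else 0) := by
      intro aa v
      have hsum : (∑ i, (((Fin.consEquiv (fun _ => Fin (B + 1))) (aa, v) i : ℕ)))
          = (aa : ℕ) + ∑ i, ((v i : ℕ)) := by
        rw [Fin.sum_univ_succ]
        simp [Fin.consEquiv]
      have hprod : (∏ i, μ (((Fin.consEquiv (fun _ => Fin (B + 1))) (aa, v) i : ℕ)))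
          = μ (aa : ℕ) * ∏ i, μ ((v i : ℕ)) := by
        rw [Fin.prod_univ_succ]
        simp [Fin.consEquiv]
      rw [hsum, hprod]
    rw [Finset.sum_congr rfl fun aa _ => Finset.sum_congr rfl fun v _ => hterm aa v]
    -- convert outer Fin sum to range sum
    rw [Fin.sum_univ_eq_sum_range (fun aN => ∑ v : Fin t → Fin (B + 1),
      if aN + ∑ i, ((v i : ℕ)) ≤ M then μ aN * ∏ i, μ ((v i : ℕ)) else 0) (B + 1)]
    rw [← Finset.sum_subset (Finset.range_subset_range.mpr (by omega : M + 1 ≤ B + 1))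
      (fun aN _ haN => Finset.sum_eq_zero fun v _ => if_neg (by
        rw [Finset.mem_range] at haN
        omega))]
    -- evaluate each a ≤ M via IH
    have hval : ∀ aN ∈ Finset.range (M + 1),
        (∑ v : Fin t → Fin (B + 1),
          if aN + ∑ i, ((v i : ℕ)) ≤ M then μ aN * ∏ i, μ ((v i : ℕ)) else 0)
        = μ aN * ∑ j ∈ Finset.range (M - aN + 1), sumLaw μ t j := by
      intro aN haN
      rw [Finset.mem_range] at haN
      have h1 : ∀ v : Fin t → Fin (B + 1),
          (if aN + ∑ i, ((v i : ℕ)) ≤ M then μ aN * ∏ i, μ ((v i : ℕ)) else 0)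
          = μ aN * (if (∑ i, ((v i : ℕ))) ≤ M - aN then ∏ i, μ ((v i : ℕ)) else 0) := by
        intro v
        by_cases hc : aN + ∑ i, ((v i : ℕ)) ≤ M
        · rw [if_pos hc, if_pos (by omega)]
        · rw [if_neg hc, if_neg (by omega), mul_zero]
      rw [Finset.sum_congr rfl fun v _ => h1 v, ← Finset.mul_sum, ih (M - aN) (by omega)]
    rw [Finset.sum_congr rfl hval]
    -- now identify with the convolution double sum
    have hR : ∀ j, sumLaw μ (t + 1) j
        = ∑ c ∈ Finset.range (j + 1), μ c * sumLaw μ t (j - c) := fun j => rfl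
    rw [Finset.sum_congr rfl fun j _ => hR j]
    have hfil : ∀ j ∈ Finset.range (M + 1),
        ∑ c ∈ Finset.range (j + 1), μ c * sumLaw μ t (j - c)
        = ∑ c ∈ Finset.range (M + 1), (if c ≤ j then μ c * sumLaw μ t (j - c) else 0) := by
      intro j hj
      rw [Finset.mem_range] at hj
      rw [← Finset.sum_filter]
      congr 1
      ext c
      simp only [Finset.mem_range, Finset.mem_filter]
      omega
    rw [Finset.sum_congr rfl hfil, Finset.sum_comm]
    refine Finset.sum_congr rfl fun c hc => ?_
    rw [Finset.mem_range] at hc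
    have hre : ∑ j ∈ Finset.range (M + 1), (if c ≤ j then μ c * sumLaw μ t (j - c) else 0)
        = ∑ j ∈ Finset.range (M - c + 1), μ c * sumLaw μ t j := by
      rw [← Finset.sum_filter]
      refine Finset.sum_nbij' (fun j => j - c) (fun j => j + c) ?_ ?_ ?_ ?_ ?_
      · intro x hx
        simp only [Finset.mem_filter, Finset.mem_range] at hx ⊢
        omega
      · intro x hx
        simp only [Finset.mem_filter, Finset.mem_range] at hx ⊢
        omega
      · intro x hx
        simp only [Finset.mem_filter, Finset.mem_range] at hx
        show x - c + c = x
        omega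
      · intro x hx
        simp only [Finset.mem_range] at hx
        show x + c - c = x
        omega
      · intro x hx
        simp only [Finset.mem_filter, Finset.mem_range] at hx
        rfl
    rw [hre, ← Finset.mul_sum]

end DRX

namespace DRX

lemma split_eval {N B : ℕ} (U : Finset (Fin N)) (d w : ℕ → ℝ) (M : ℕ) :
    (∑ x : Fin N → Fin (B + 1),
      if (∑ i ∈ Finset.univ \ U, ((x i : ℕ))) ≤ M
        then (∏ i ∈ U, d ((x i : ℕ))) * ∏ i ∈ Finset.univ \ U, w ((x i : ℕ)) else 0)
    = (∑ a ∈ Finset.range (B + 1), d a) ^ U.card *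
      ∑ z : {i : Fin N // ¬ i ∈ U} → Fin (B + 1),
        (if (∑ i, ((z i : ℕ))) ≤ M then ∏ i, w ((z i : ℕ)) else 0) := by
  classical
  set F : (Fin N → Fin (B + 1)) → ℝ := fun x =>
    if (∑ i ∈ Finset.univ \ U, ((x i : ℕ))) ≤ M
      then (∏ i ∈ U, d ((x i : ℕ))) * ∏ i ∈ Finset.univ \ U, w ((x i : ℕ)) else 0 with hF
  let e := Equiv.piEquivPiSubtypeProd (fun i => i ∈ U) (fun _ => Fin (B + 1))
  have h0 : ∑ x : Fin N → Fin (B + 1), F x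
      = ∑ y : ((i : {i : Fin N // i ∈ U}) → Fin (B + 1)) × ((i : {i : Fin N // ¬ i ∈ U}) → Fin (B + 1)),
          F (e.symm y) := (Equiv.sum_comp e.symm F).symm
  rw [h0, Fintype.sum_prod_type]
  have hcoord1 : ∀ (y : (i : {i : Fin N // i ∈ U}) → Fin (B + 1))
      (z : (i : {i : Fin N // ¬ i ∈ U}) → Fin (B + 1)) (i : Fin N) (h : i ∈ U),
      e.symm (y, z) i = y ⟨i, h⟩ := by
    intro y z i h
    simp [e, Equiv.piEquivPiSubtypeProd_symm_apply, dif_pos h]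
  have hcoord2 : ∀ (y : (i : {i : Fin N // i ∈ U}) → Fin (B + 1))
      (z : (i : {i : Fin N // ¬ i ∈ U}) → Fin (B + 1)) (i : Fin N) (h : ¬ i ∈ U),
      e.symm (y, z) i = z ⟨i, h⟩ := by
    intro y z i h
    simp [e, Equiv.piEquivPiSubtypeProd_symm_apply, dif_neg h]
  let es : {i : Fin N // ¬ i ∈ U} ≃ {i : Fin N // i ∈ Uᶜ} :=
    Equiv.subtypeEquivRight (fun i => (Finset.mem_compl).symm)
  have hsd : Finset.univ \ U = Uᶜ := (Finset.compl_eq_univ_sdiff U).symm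
  have hterm : ∀ (y : (i : {i : Fin N // i ∈ U}) → Fin (B + 1))
      (z : (i : {i : Fin N // ¬ i ∈ U}) → Fin (B + 1)),
      F (e.symm (y, z)) = (∏ i : {i : Fin N // i ∈ U}, d ((y i : ℕ))) *
        (if (∑ i, ((z i : ℕ))) ≤ M then ∏ i, w ((z i : ℕ)) else 0) := by
    intro y z
    have hA : (∏ i ∈ U, d ((e.symm (y, z) i : ℕ)))
        = ∏ i : {i : Fin N // i ∈ U}, d ((y i : ℕ)) := by
      rw [← Finset.prod_coe_sort U (fun i => d ((e.symm (y, z) i : ℕ)))]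
      exact Finset.prod_congr rfl fun i _ => by rw [hcoord1 y z i.1 i.2]
    have hB : (∏ i ∈ Finset.univ \ U, w ((e.symm (y, z) i : ℕ)))
        = ∏ i : {i : Fin N // ¬ i ∈ U}, w ((z i : ℕ)) := by
      rw [hsd, ← Finset.prod_coe_sort Uᶜ (fun i => w ((e.symm (y, z) i : ℕ))),
        ← Equiv.prod_comp es (fun i : {i : Fin N // i ∈ Uᶜ} => w ((e.symm (y, z) i : ℕ)))]
      refine Finset.prod_congr rfl fun i _ => ?_
      have h1 : ((es i : Fin N)) = (i : Fin N) := rfl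
      rw [h1, hcoord2 y z i.1 i.2]
    have hC : (∑ i ∈ Finset.univ \ U, ((e.symm (y, z) i : ℕ)))
        = ∑ i : {i : Fin N // ¬ i ∈ U}, ((z i : ℕ)) := by
      rw [hsd, ← Finset.sum_coe_sort Uᶜ (fun i => ((e.symm (y, z) i : ℕ))),
        ← Equiv.sum_comp es (fun i : {i : Fin N // i ∈ Uᶜ} => ((e.symm (y, z) i : ℕ)))]
      refine Finset.sum_congr rfl fun i _ => ?_
      have h1 : ((es i : Fin N)) = (i : Fin N) := rfl
      rw [h1, hcoord2 y z i.1 i.2]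
    rw [hF]
    simp only []
    rw [hA, hB, hC]
    by_cases hcond : (∑ i : {i : Fin N // ¬ i ∈ U}, ((z i : ℕ))) ≤ M
    · rw [if_pos hcond, if_pos hcond]
    · rw [if_neg hcond, if_neg hcond, mul_zero]
  rw [Finset.sum_congr rfl fun y _ => Finset.sum_congr rfl fun z _ => hterm y z]
  have hinner : ∀ y : (i : {i : Fin N // i ∈ U}) → Fin (B + 1),
      ∑ z : (i : {i : Fin N // ¬ i ∈ U}) → Fin (B + 1),
        (∏ i : {i : Fin N // i ∈ U}, d ((y i : ℕ))) *
          (if (∑ i, ((z i : ℕ))) ≤ M then ∏ i, w ((z i : ℕ)) else 0)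
      = (∏ i : {i : Fin N // i ∈ U}, d ((y i : ℕ))) *
          ∑ z : (i : {i : Fin N // ¬ i ∈ U}) → Fin (B + 1),
            (if (∑ i, ((z i : ℕ))) ≤ M then ∏ i, w ((z i : ℕ)) else 0) :=
    fun y => (Finset.mul_sum _ _ _).symm
  rw [Finset.sum_congr rfl fun y _ => hinner y, ← Finset.sum_mul]
  congr 1
  -- ∑ y, ∏ d = (∑ d)^card
  have h1 := Finset.prod_univ_sum (fun _ : {i : Fin N // i ∈ U} => (Finset.univ : Finset (Fin (B + 1))))
    (fun _ a => d ((a : ℕ)))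
  rw [Fintype.piFinset_univ] at h1
  rw [← h1]
  have hval : ∀ _i : {i : Fin N // i ∈ U},
      (∑ a : Fin (B + 1), d ((a : ℕ))) = ∑ a ∈ Finset.range (B + 1), d a :=
    fun _ => Fin.sum_univ_eq_sum_range (fun a => d a) (B + 1)
  rw [Finset.prod_congr rfl fun i _ => hval i, Finset.prod_const, Finset.card_univ,
    Fintype.card_coe]

lemma subtype_to_fin {N B k : ℕ} (U : Finset (Fin N)) (hcard : U.card = k) (w : ℕ → ℝ)
    (M : ℕ) :
    (∑ z : {i : Fin N // ¬ i ∈ U} → Fin (B + 1),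
        (if (∑ i, ((z i : ℕ))) ≤ M then ∏ i, w ((z i : ℕ)) else 0))
    = ∑ v : Fin (N - k) → Fin (B + 1),
        (if (∑ i, ((v i : ℕ))) ≤ M then ∏ i, w ((v i : ℕ)) else 0) := by
  classical
  have hc : Fintype.card {i : Fin N // ¬ i ∈ U} = N - k := by
    rw [Fintype.card_subtype_compl, Fintype.card_fin]
    congr 1
    rw [← hcard]
    exact Fintype.card_coe U
  let eZ : {i : Fin N // ¬ i ∈ U} ≃ Fin (N - k) := Fintype.equivFinOfCardEq hc
  let e : (Fin (N - k) → Fin (B + 1)) ≃ ({i : Fin N // ¬ i ∈ U} → Fin (B + 1)) :=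
    Equiv.arrowCongr eZ.symm (Equiv.refl (Fin (B + 1)))
  rw [← Equiv.sum_comp e (fun z : {i : Fin N // ¬ i ∈ U} → Fin (B + 1) =>
    if (∑ i, ((z i : ℕ))) ≤ M then ∏ i, w ((z i : ℕ)) else 0)]
  refine Finset.sum_congr rfl fun v _ => ?_
  have happ : ∀ i : {i : Fin N // ¬ i ∈ U}, e v i = v (eZ i) := fun i => rfl
  have hsum : (∑ i, ((e v i : ℕ))) = ∑ t, ((v t : ℕ)) := by
    rw [Finset.sum_congr rfl fun i _ => by rw [happ i]]
    exact Equiv.sum_comp eZ (fun t => ((v t : ℕ)))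
  have hprod : (∏ i, w ((e v i : ℕ))) = ∏ t, w ((v t : ℕ)) := by
    rw [Finset.prod_congr rfl fun i _ => by rw [happ i]]
    exact Equiv.prod_comp eZ (fun t => w ((v t : ℕ)))
  rw [hsum, hprod]

end DRX


open DRX

/-- Proposition 2.2 (2). Fix `δ ∈ (0, 1/2)` and assume
`c_2 = E(m^{(1-δ)X_0^*}) < ∞`. Then for every `p ∈ (0,1)`, `k ≥ 1` and `n ≥ 1`,
`|dᵏ/dpᵏ P(X_n = 0)| ≤ 2^k k! m^{kn} P(Σ_{i=1}^{m^n - k} X_{0,i} ≤ m^n)`. -/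
theorem deriv_PXn_zero_bound_two
    (m : ℕ) (hm : 2 ≤ m) (ν : ℕ → ℝ)
    (hν0 : ν 0 = 0) (hνnn : ∀ k, 0 ≤ ν k) (hνsum : ∑' k, ν k = 1)
    (δ : ℝ) (hδ : δ ∈ Set.Ioo (0 : ℝ) (1 / 2))
    (hc2 : Summable fun j : ℕ => ν j * (m : ℝ) ^ ((1 - δ) * (j : ℝ)))
    (p : ℝ) (hp : p ∈ Set.Ioo (0 : ℝ) 1)
    (k : ℕ) (hk : 1 ≤ k) (n : ℕ) (hn : 1 ≤ n) :
    |iteratedDeriv k (fun q => drLaw m ν q n 0) p| ≤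
      2 ^ k * (k.factorial : ℝ) * (m : ℝ) ^ (k * n) *
        ∑ j ∈ Finset.range (m ^ n + 1), sumLaw (mix ν p) (m ^ n - k) j := by
  classical
  obtain ⟨hp0, hp1⟩ := hp
  -- affine decomposition of the mixed law
  set A : ℕ → ℝ := fun c => if c = 0 then (1:ℝ) else 0 with hA
  set bf : ℕ → ℝ := fun c => ν c - A c with hbf
  have mix_affine : ∀ (q : ℝ) (c : ℕ), mix ν q c = A c + bf c * q := by
    intro q c
    simp only [hA, hbf, mix]
    split_ifs <;> ring
  set dd : ℕ → ℝ := fun c => |bf c| with hdd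
  set B := m ^ n with hB
  set ι : (Fin (m ^ n) → Fin (B + 1)) → (Fin (m ^ n) → ℕ) := fun x i => (x i : ℕ) with hι
  set G : ℝ → ℝ := fun q => ∑ x : Fin (m ^ n) → Fin (B + 1),
    if DRX.tf m n (ι x) = 0 then ∏ i, mix ν q (ι x i) else 0 with hG
  have hGd : iteratedDeriv k (fun q => drLaw m ν q n 0) p = iteratedDeriv k G p := by
    refine Filter.EventuallyEq.iteratedDeriv_eq k ?_
    refine Filter.eventually_of_mem (isOpen_Ioo.mem_nhds (Set.mem_Ioo.mpr ⟨hp0, hp1⟩))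
      (fun q hq => ?_)
    exact DRX.repr_finite hm hνnn hνsum hq.1.le hq.2.le n
  rw [hGd]
  set filt : Finset (Fin (m ^ n) → Fin (B + 1)) :=
    Finset.univ.filter (fun x => DRX.tf m n (ι x) = 0) with hfilt
  have hGf : G = fun q => ∑ x ∈ filt, ∏ i, mix ν q (ι x i) := by
    funext q
    rw [hG, hfilt, Finset.sum_filter]
  -- smoothness of each summand
  have hfeq : ∀ x : Fin (m ^ n) → Fin (B + 1),
      (fun q => ∏ i, mix ν q (ι x i))
        = fun q => ∏ i ∈ Finset.univ, ((fun i => A (ι x i)) i + (fun i => bf (ι x i)) i * q) :=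
    fun x => funext fun q => Finset.prod_congr rfl fun i _ => mix_affine q (ι x i)
  have hsmooth : ∀ x ∈ filt, ContDiff ℝ (⊤:ℕ∞) (fun q => ∏ i, mix ν q (ι x i)) := by
    intro x _
    rw [hfeq x]
    exact contDiff_affprod Finset.univ _ _
  have hsplit : iteratedDeriv k G p
      = ∑ x ∈ filt, iteratedDeriv k (fun q => ∏ i, mix ν q (ι x i)) p := by
    rw [hGf]
    exact iteratedDeriv_finset_sum filt _ hsmooth k p
  rw [hsplit]
  have habs : ∀ c : ℕ, |A c + bf c * p| = mix ν p c := fun c => by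
    rw [← mix_affine p c]
    exact abs_of_nonneg (DRX.mix_nonneg hνnn hp0.le hp1.le c)
  -- per-term derivative bound
  have hper : ∀ x ∈ filt, |iteratedDeriv k (fun q => ∏ i, mix ν q (ι x i)) p|
      ≤ (k.factorial : ℝ) * ∑ U ∈ Finset.univ.powersetCard k,
          (∏ i ∈ U, dd (ι x i)) * ∏ i ∈ Finset.univ \ U, mix ν p (ι x i) := by
    intro x _
    rw [hfeq x]
    refine (DRX.key_bound (fun i => A (ι x i)) (fun i => bf (ι x i)) p Finset.univ k).trans
      (le_of_eq ?_)
    congr 1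
    refine Finset.sum_congr rfl fun U _ => ?_
    congr 1
    exact Finset.prod_congr rfl fun i _ => habs (ι x i)
  have habs2 : |∑ x ∈ filt, iteratedDeriv k (fun q => ∏ i, mix ν q (ι x i)) p|
      ≤ ∑ x ∈ filt, |iteratedDeriv k (fun q => ∏ i, mix ν q (ι x i)) p| :=
    Finset.abs_sum_le_sum_abs _ _
  set P : ℝ := ∑ j ∈ Finset.range (B + 1), sumLaw (mix ν p) (B - k) j with hP
  set Dsum : ℝ := ∑ a ∈ Finset.range (B + 1), dd a with hDsum
  have hDnn : 0 ≤ Dsum := Finset.sum_nonneg fun a _ => abs_nonneg _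
  have hP0 : 0 ≤ P :=
    Finset.sum_nonneg fun j _ => sumLaw_nonneg (DRX.mix_nonneg hνnn hp0.le hp1.le) _ j
  -- per-U evaluation
  have hU : ∀ U ∈ (Finset.univ : Finset (Fin (m ^ n))).powersetCard k,
      ∑ x ∈ filt, (∏ i ∈ U, dd (ι x i)) * ∏ i ∈ Finset.univ \ U, mix ν p (ι x i)
        ≤ Dsum ^ k * P := by
    intro U hUmem
    have hUcard : U.card = k := (Finset.mem_powersetCard.mp hUmem).2
    have hsub : filt ⊆ Finset.univ.filter
        (fun x => (∑ i ∈ Finset.univ \ U, (ι x i)) ≤ B) := by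
      intro x hx
      rw [hfilt, Finset.mem_filter] at hx
      rw [Finset.mem_filter]
      refine ⟨Finset.mem_univ _, ?_⟩
      have h1 : ∑ i ∈ Finset.univ \ U, (ι x i) ≤ ∑ i, (ι x i) :=
        Finset.sum_le_sum_of_subset (Finset.sdiff_subset)
      have h2 := DRX.sum_le_tf m n (ι x)
      rw [hx.2] at h2
      have h3 := DRX.geom_le hm n
      omega
    have hnn : ∀ x : Fin (m ^ n) → Fin (B + 1),
        0 ≤ (∏ i ∈ U, dd (ι x i)) * ∏ i ∈ Finset.univ \ U, mix ν p (ι x i) :=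
      fun x => mul_nonneg (Finset.prod_nonneg fun i _ => abs_nonneg _)
        (Finset.prod_nonneg fun i _ => DRX.mix_nonneg hνnn hp0.le hp1.le _)
    refine (Finset.sum_le_sum_of_subset_of_nonneg hsub (fun x _ _ => hnn x)).trans
      (le_of_eq ?_)
    rw [Finset.sum_filter]
    rw [DRX.split_eval U dd (mix ν p) B, hUcard,
      DRX.subtype_to_fin U hUcard (mix ν p) B,
      DRX.SB_eq (mix ν p) B (m ^ n - k) B le_rfl]
  -- Dsum ≤ 2
  have hD2 : Dsum ≤ 2 := by
    have hbf0 : dd 0 = 1 := by simp [hdd, hbf, hA, hν0]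
    have hbfs : ∀ i : ℕ, dd (i + 1) = ν (i + 1) := by
      intro i
      simp only [hdd, hbf, hA]
      rw [if_neg (Nat.succ_ne_zero i), sub_zero]
      exact abs_of_nonneg (hνnn _)
    have h1 : Dsum = (∑ i ∈ Finset.range B, ν (i + 1)) + 1 := by
      rw [hDsum, Finset.sum_range_succ']
      rw [hbf0]
      congr 1
      exact Finset.sum_congr rfl fun i _ => hbfs i
    have h2 : ∑ a ∈ Finset.range (B + 1), ν a ≤ 1 := by
      rw [← hνsum]
      exact (nu_summable hνsum).sum_le_tsum _ (fun i _ => hνnn i)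
    have h3 : ∑ a ∈ Finset.range (B + 1), ν a = (∑ i ∈ Finset.range B, ν (i + 1)) + ν 0 :=
      Finset.sum_range_succ' _ _
    rw [hν0, add_zero] at h3
    rw [h1]
    linarith [h3 ▸ h2]
  -- put it together
  have hcard : ((Finset.univ : Finset (Fin (m ^ n))).powersetCard k).card = (m ^ n).choose k := by
    rw [Finset.card_powersetCard, Finset.card_univ, Fintype.card_fin]
  calc |∑ x ∈ filt, iteratedDeriv k (fun q => ∏ i, mix ν q (ι x i)) p|
      ≤ ∑ x ∈ filt, |iteratedDeriv k (fun q => ∏ i, mix ν q (ι x i)) p| := habs2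
    _ ≤ ∑ x ∈ filt, (k.factorial : ℝ) * ∑ U ∈ Finset.univ.powersetCard k,
          (∏ i ∈ U, dd (ι x i)) * ∏ i ∈ Finset.univ \ U, mix ν p (ι x i) :=
        Finset.sum_le_sum hper
    _ = (k.factorial : ℝ) * ∑ x ∈ filt, ∑ U ∈ Finset.univ.powersetCard k,
          (∏ i ∈ U, dd (ι x i)) * ∏ i ∈ Finset.univ \ U, mix ν p (ι x i) :=
        (Finset.mul_sum _ _ _).symm
    _ = (k.factorial : ℝ) * ∑ U ∈ Finset.univ.powersetCard k, ∑ x ∈ filt,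
          (∏ i ∈ U, dd (ι x i)) * ∏ i ∈ Finset.univ \ U, mix ν p (ι x i) := by
        rw [Finset.sum_comm]
    _ ≤ (k.factorial : ℝ) * ∑ U ∈ (Finset.univ : Finset (Fin (m ^ n))).powersetCard k,
          Dsum ^ k * P := by
        refine mul_le_mul_of_nonneg_left (Finset.sum_le_sum hU) (by positivity)
    _ = (k.factorial : ℝ) * (((m ^ n).choose k : ℝ) * (Dsum ^ k * P)) := by
        rw [Finset.sum_const, hcard, nsmul_eq_mul]
    _ ≤ 2 ^ k * (k.factorial : ℝ) * (m : ℝ) ^ (k * n) * P := by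
        have hDk : Dsum ^ k ≤ 2 ^ k := pow_le_pow_left₀ hDnn hD2 k
        have hfc : (k.factorial : ℝ) * ((m ^ n).choose k : ℝ) ≤ (m : ℝ) ^ (k * n) := by
          have hnat : k.factorial * (m ^ n).choose k ≤ m ^ (k * n) := by
            calc k.factorial * (m ^ n).choose k = (m ^ n).descFactorial k :=
                  (Nat.descFactorial_eq_factorial_mul_choose _ _).symm
              _ ≤ (m ^ n) ^ k := Nat.descFactorial_le_pow _ _
              _ = m ^ (n * k) := (pow_mul m n k).symm
              _ = m ^ (k * n) := by rw [Nat.mul_comm]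
          exact_mod_cast hnat
        have hfc1 : (1:ℝ) ≤ (k.factorial : ℝ) := by
          exact_mod_cast Nat.one_le_iff_ne_zero.mpr (Nat.factorial_ne_zero k)
        have h1 : Dsum ^ k * P ≤ 2 ^ k * P := mul_le_mul_of_nonneg_right hDk hP0
        calc (k.factorial : ℝ) * (((m ^ n).choose k : ℝ) * (Dsum ^ k * P))
            = ((k.factorial : ℝ) * ((m ^ n).choose k : ℝ)) * (Dsum ^ k * P) := by ring
          _ ≤ (m : ℝ) ^ (k * n) * (Dsum ^ k * P) :=
              mul_le_mul_of_nonneg_right hfc (mul_nonneg (pow_nonneg hDnn k) hP0)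
          _ ≤ (m : ℝ) ^ (k * n) * (2 ^ k * P) :=
              mul_le_mul_of_nonneg_left h1 (by positivity)
          _ ≤ 2 ^ k * (k.factorial : ℝ) * (m : ℝ) ^ (k * n) * P := by
              nlinarith [hfc1, (show (0:ℝ) ≤ 2 ^ k * (m : ℝ) ^ (k * n) * P by positivity)]
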